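/- Let f : ℝ → ℂ be continuous with compact support and define g(t) = ∫_{t-1}^{t} f(s) ds (the convolution of f with the indicator function of [0,1]). If g is differentiable and its derivative g' is a Lipschitz function of order α for some α ∈ (0,1] (i.e., |g'(x) - g'(y)| ≤ L|x-y|^α for some L > 0 and all x,y), then f is a Lipschitz function of order α. -/

import Mathlib

open intervalIntegral

/-- Let `f : ℝ → ℂ` be continuous with compact support and
`g(t) = ∫_{t-1}^t f(s) ds`. If `g` is differentiable and `g'` is Hölder of order
`α ∈ (0,1]`, then `f` is Hölder of order `α`. -/
theorem stmt_10 (f : ℝ → ℂ) (hf : Continuous f) (hcs : HasCompactSupport f)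
    (g : ℝ → ℂ) (hg : ∀ t : ℝ, g t = ∫ s in (t - 1)..t, f s)
    (hdiff : Differentiable ℝ g)
    (α : ℝ) (hα0 : 0 < α) (hα1 : α ≤ 1)
    (L : ℝ) (hL : 0 < L)
    (hHolder : ∀ x y : ℝ, ‖deriv g x - deriv g y‖ ≤ L * |x - y| ^ α) :
    ∃ L' : ℝ, 0 < L' ∧ ∀ x y : ℝ, ‖f x - f y‖ ≤ L' * |x - y| ^ α := by
  -- deriv g t = f t - f (t-1)
  have hInt : ∀ a b : ℝ, IntervalIntegrable f MeasureTheory.volume a b :=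
    fun a b => hf.intervalIntegrable a b
  set F : ℝ → ℂ := fun t => ∫ s in (0:ℝ)..t, f s with hF
  have hgF : ∀ t, g t = F t - F (t - 1) := by
    intro t
    rw [hg t, hF]
    have := intervalIntegral.integral_add_adjacent_intervals (hInt 0 (t-1)) (hInt (t-1) t)
    rw [eq_sub_iff_add_eq, add_comm]
    exact this
  have hdF : ∀ s : ℝ, HasDerivAt F (f s) s := fun s =>
    intervalIntegral.integral_hasDerivAt_right (hInt 0 s)
      (hf.stronglyMeasurableAtFilter _ _) hf.continuousAt
  have hderiv : ∀ t, deriv g t = f t - f (t - 1) := by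
    intro t
    have h2 : HasDerivAt (fun u : ℝ => F (u - 1)) (f (t - 1)) t :=
      HasDerivAt.comp_sub_const t 1 (hdF (t - 1))
    have h1 : HasDerivAt (fun u => F u - F (u - 1)) (f t - f (t-1)) t := (hdF t).sub h2
    exact (h1.congr_of_eventuallyEq (Filter.Eventually.of_forall fun s => (hgF s))).deriv
  -- telescoping
  have tele : ∀ (N : ℕ) (t : ℝ),
      f (t + N) - f t = ∑ k ∈ Finset.range N, deriv g (t + k + 1) := by
    intro N t
    induction N with
    | zero => simp
    | succ n ih =>
      rw [Finset.sum_range_succ, ← ih, hderiv (t + n + 1)]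
      have h1 : t + (↑(n+1) : ℝ) = t + n + 1 := by push_cast; ring
      have h2 : t + (n:ℝ) + 1 - 1 = t + n := by ring
      rw [h1, h2]
      ring
  -- bounds
  obtain ⟨C, hC⟩ := hcs.exists_bound_of_continuous hf
  have hC0 : 0 ≤ C := le_trans (norm_nonneg _) (hC 0)
  obtain ⟨M0, hM0sub⟩ := hcs.isBounded.subset_closedBall 0
  set M : ℝ := max M0 0 with hMdef
  have hM0 : 0 ≤ M := le_max_right _ _
  have hMsub : tsupport f ⊆ Metric.closedBall 0 M :=
    hM0sub.trans (Metric.closedBall_subset_closedBall (le_max_left _ _))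
  have hzero : ∀ x : ℝ, M < |x| → f x = 0 := by
    intro x hx
    apply image_eq_zero_of_notMem_tsupport
    intro hmem
    have := hMsub hmem
    rw [Metric.mem_closedBall, Real.dist_eq, sub_zero] at this
    linarith
  -- choose N
  set N : ℕ := ⌈2 * M + 2⌉₊ + 1 with hNdef
  have hNge : 2 * M + 2 ≤ (N : ℝ) := by
    have := Nat.le_ceil (2 * M + 2)
    push_cast [hNdef]
    linarith
  have hN1 : (1:ℝ) ≤ (N:ℝ) := by linarith
  refine ⟨(N : ℝ) * L + 2 * C + 1, by positivity, ?_⟩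
  intro x y
  have habs : ∀ z : ℂ, ‖z‖ = ‖z‖ := fun z => rfl
  have hrpow0 : (0:ℝ) ≤ |x - y| ^ α := Real.rpow_nonneg (abs_nonneg _) α
  rcases le_or_gt 1 |x - y| with hbig | hsmall
  · -- big gap: use boundedness
    have h1 : ‖f x - f y‖ ≤ 2 * C := by
      rw [habs]
      calc ‖f x - f y‖ ≤ ‖f x‖ + ‖f y‖ := norm_sub_le _ _
        _ ≤ 2 * C := by have := hC x; have := hC y; linarith
    have h2 : (1:ℝ) ≤ |x - y| ^ α := Real.one_le_rpow hbig (le_of_lt hα0)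
    have hNL : (0:ℝ) ≤ (N:ℝ) * L + 2 * C + 1 := by positivity
    calc ‖f x - f y‖ ≤ 2 * C := h1
      _ ≤ ((N:ℝ) * L + 2 * C + 1) * 1 := by nlinarith
      _ ≤ ((N:ℝ) * L + 2 * C + 1) * |x - y| ^ α := by nlinarith
  · -- small gap
    rcases lt_or_ge (max x y) (-M) with hout | hin
    · -- both far left: f x = f y = 0
      have hx0 : f x = 0 := hzero x (by
        have : x < -M := lt_of_le_of_lt (le_max_left x y) hout
        rw [abs_of_neg (by linarith)]; linarith)
      have hy0 : f y = 0 := hzero y (by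
        have : y < -M := lt_of_le_of_lt (le_max_right x y) hout
        rw [abs_of_neg (by linarith)]; linarith)
      rw [hx0, hy0, sub_zero, norm_zero]
      positivity
    · -- telescoping case
      have hxlow : -M - 1 < x := by
        rcases le_total x y with h | h
        · have : |x - y| = y - x := by rw [abs_of_nonpos (by linarith)]; ring
          have := le_max_iff.mp (le_refl (max x y))
          rcases max_choice x y with hm | hm <;> rw [hm] at hin <;> linarith [hsmall, this]
        · have : x ≥ max x y := by rw [max_eq_left h]
          linarith
      have hylow : -M - 1 < y := by
        rcases le_total y x with h | h
        · have : |x - y| = x - y := by rw [abs_of_nonneg (by linarith)]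
          rcases max_choice x y with hm | hm <;> rw [hm] at hin <;> linarith
        · have : y ≥ max x y := by rw [max_eq_right h]
          linarith
      have hfxN : f (x + N) = 0 := hzero _ (by rw [abs_of_pos (by linarith)]; linarith)
      have hfyN : f (y + N) = 0 := hzero _ (by rw [abs_of_pos (by linarith)]; linarith)
      have hx := tele N x
      have hy := tele N y
      rw [hfxN] at hx
      rw [hfyN] at hy
      have hkey : f x - f y = ∑ k ∈ Finset.range N, (deriv g (y + k + 1) - deriv g (x + k + 1)) := by
        rw [Finset.sum_sub_distrib]
        have hx' : f x = -∑ k ∈ Finset.range N, deriv g (x + k + 1) := by linear_combination -hx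
        have hy' : f y = -∑ k ∈ Finset.range N, deriv g (y + k + 1) := by linear_combination -hy
        rw [hx', hy']
        ring
      rw [hkey, habs]
      calc ‖∑ k ∈ Finset.range N, (deriv g (y + k + 1) - deriv g (x + k + 1))‖
          ≤ ∑ k ∈ Finset.range N, ‖deriv g (y + k + 1) - deriv g (x + k + 1)‖ :=
            norm_sum_le _ _
        _ ≤ ∑ _k ∈ Finset.range N, L * |x - y| ^ α := by
            apply Finset.sum_le_sum
            intro k _
            have := hHolder (y + k + 1) (x + k + 1)
            rw [habs] at this
            have heq : |y + k + 1 - (x + k + 1)| = |x - y| := by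
              rw [show y + k + 1 - (x + k + 1) = -(x - y) by ring, abs_neg]
            rw [heq] at this
            exact this
        _ = (N : ℝ) * (L * |x - y| ^ α) := by
            rw [Finset.sum_const, Finset.card_range, nsmul_eq_mul]
        _ ≤ ((N : ℝ) * L + 2 * C + 1) * |x - y| ^ α := by nlinarith
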